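/- Let M ≥ 2 be an integer, σ² > 0, γ > 0, and let u₁, u₂ ∈ ℂ^M be unit vectors with u₁*u₂ = 0. Set R₁ = γ·u₁u₁* + σ²·I and R₂ = γ·u₂u₂* + σ²·I (M×M complex matrices, where I is the identity). Then R₂ is invertible and the characteristic polynomial of R₂⁻¹R₁ equals (X − (γ + σ²)/σ²) · (X − σ²/(γ + σ²)) · (X − 1)^{M−2}; in particular the eigenvalues of R₂⁻¹R₁ are (γ + σ²)/σ², σ²/(γ + σ²), and 1 with multiplicity M − 2. -/

import Mathlib

open Polynomial
open Matrix

lemma aux_vecMulVec_mulVec {M : ℕ} (u v x : Fin M → ℂ) :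
    (Matrix.vecMulVec u v) *ᵥ x = (dotProduct v x) • u := by
  funext j
  simp [Matrix.mulVec, Matrix.vecMulVec, dotProduct, Finset.mul_sum, mul_comm, mul_assoc,
    mul_left_comm]

lemma aux_vecMulVec_mul {M : ℕ} (u v w z : Fin M → ℂ) :
    Matrix.vecMulVec u v * Matrix.vecMulVec w z
      = (dotProduct v w) • Matrix.vecMulVec u z := by
  ext i j
  simp [Matrix.mul_apply, Matrix.vecMulVec, dotProduct, Finset.mul_sum, Finset.sum_mul]
  congr 1; funext k; ring

lemma aux_expand1 {n : ℕ} (P : Matrix (Fin n) (Fin n) ℂ) (hP : P * P = P) (p q x y : ℂ) :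
    (p • P + q • (1 : Matrix (Fin n) (Fin n) ℂ)) * (x • (1 : Matrix (Fin n) (Fin n) ℂ) - y • P)
      = (p * x - p * y - q * y) • P + (q * x) • (1 : Matrix (Fin n) (Fin n) ℂ) := by
  simp only [Matrix.add_mul, Matrix.mul_sub, Matrix.smul_mul, Matrix.mul_smul, smul_smul, hP,
    Matrix.mul_one, Matrix.one_mul]
  module

lemma aux_expand2 {n : ℕ} (P Q : Matrix (Fin n) (Fin n) ℂ) (hPQ : P * Q = 0) (x y p q : ℂ) :
    (x • (1 : Matrix (Fin n) (Fin n) ℂ) - y • P) * (p • Q + q • (1 : Matrix (Fin n) (Fin n) ℂ))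
      = (x * p) • Q + (x * q) • (1 : Matrix (Fin n) (Fin n) ℂ) - (y * q) • P := by
  simp only [Matrix.sub_mul, Matrix.mul_add, Matrix.smul_mul, Matrix.mul_smul, smul_smul, hPQ,
    Matrix.mul_one, Matrix.one_mul, smul_zero]
  module

lemma aux_charpoly_conj {n : ℕ} (U V D : Matrix (Fin n) (Fin n) ℂ)
    (hUV : U * V = 1) : (U * D * V).charpoly = D.charpoly := by
  have hC : ∀ A B : Matrix (Fin n) (Fin n) ℂ,
      (A * B).map (C : ℂ →+* ℂ[X]) = A.map C * B.map C := fun A B =>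
    Matrix.map_mul
  unfold Matrix.charpoly
  have key : Matrix.charmatrix (U * D * V)
      = U.map C * Matrix.charmatrix D * V.map C := by
    unfold Matrix.charmatrix
    rw [RingHom.mapMatrix_apply, RingHom.mapMatrix_apply, Matrix.mul_sub, Matrix.sub_mul, hC, hC]
    congr 1
    rw [mul_assoc, ((Matrix.scalar_commute (X : ℂ[X]) (Commute.all X) (V.map C))).eq, ← mul_assoc,
      ← hC, hUV, Matrix.map_one C (map_zero C) (map_one C), Matrix.one_mul]
  rw [key, Matrix.det_mul, Matrix.det_mul]
  have hdet : (U.map (C : ℂ →+* ℂ[X])).det * (V.map C).det = 1 := by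
    rw [← Matrix.det_mul, ← hC, hUV, Matrix.map_one C (map_zero C) (map_one C), Matrix.det_one]
  calc (U.map (C : ℂ →+* ℂ[X])).det * (Matrix.charmatrix D).det * (V.map C).det
      = (Matrix.charmatrix D).det * ((U.map C).det * (V.map C).det) := by ring
    _ = (Matrix.charmatrix D).det := by rw [hdet, mul_one]

lemma aux_charpoly_diagonal {n : ℕ} (d : Fin n → ℂ) :
    (Matrix.diagonal d).charpoly = ∏ i, (X - C (d i)) := by
  unfold Matrix.charpoly Matrix.charmatrix
  rw [RingHom.mapMatrix_apply, Matrix.diagonal_map (map_zero C), Matrix.scalar_apply,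
    Matrix.diagonal_sub, Matrix.det_diagonal]

/-- for orthogonal unit vectors `u₁, u₂` and
`R₁ = γu₁u₁* + σ²I`, `R₂ = γu₂u₂* + σ²I`, the matrix `R₂` is invertible and the
characteristic polynomial of `R₂⁻¹R₁` is
`(X − (γ+σ²)/σ²)(X − σ²/(γ+σ²))(X − 1)^{M−2}`. -/
theorem charpoly_subspace_change (M : ℕ) (hM : 2 ≤ M) (s γ : ℝ) (hs : 0 < s) (hγ : 0 < γ)
    (u₁ u₂ : Fin M → ℂ)
    (hu₁ : dotProduct (star u₁) u₁ = 1)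
    (hu₂ : dotProduct (star u₂) u₂ = 1)
    (horth : dotProduct (star u₁) u₂ = 0) :
    ∀ R₁ R₂ : Matrix (Fin M) (Fin M) ℂ,
      R₁ = (γ : ℂ) • Matrix.vecMulVec u₁ (star u₁) + (s : ℂ) • (1 : Matrix (Fin M) (Fin M) ℂ) →
      R₂ = (γ : ℂ) • Matrix.vecMulVec u₂ (star u₂) + (s : ℂ) • (1 : Matrix (Fin M) (Fin M) ℂ) →
      IsUnit R₂.det ∧
      (R₂⁻¹ * R₁).charpoly =
        (X - C ((((γ + s) / s : ℝ)) : ℂ)) * (X - C (((s / (γ + s) : ℝ)) : ℂ)) *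
          (X - 1) ^ (M - 2) := by
  intro R₁ R₂ hR₁ hR₂
  haveI : NeZero M := ⟨by omega⟩
  have hs' : (s : ℂ) ≠ 0 := by exact_mod_cast hs.ne'
  have hgs : (0 : ℝ) < γ + s := by linarith
  have hgs' : ((γ : ℂ) + s) ≠ 0 := by
    have : ((γ + s : ℝ) : ℂ) ≠ 0 := by exact_mod_cast hgs.ne'
    push_cast at this; exact this
  set P₁ := Matrix.vecMulVec u₁ (star u₁) with hP₁def
  set P₂ := Matrix.vecMulVec u₂ (star u₂) with hP₂def
  have horth' : dotProduct (star u₂) u₁ = 0 := by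
    have h := congrArg (starRingEnd ℂ) horth
    simpa [dotProduct, map_sum, mul_comm] using h
  have hP₂P₂ : P₂ * P₂ = P₂ := by
    rw [hP₂def, aux_vecMulVec_mul, hu₂, one_smul]
  have hP₂P₁ : P₂ * P₁ = 0 := by
    rw [hP₂def, hP₁def, aux_vecMulVec_mul, horth', zero_smul]
  set c : ℂ := (γ : ℂ) / ((γ : ℂ) + s) with hcdef
  set B : Matrix (Fin M) (Fin M) ℂ :=
    (s : ℂ)⁻¹ • (1 : Matrix (Fin M) (Fin M) ℂ) - ((s : ℂ)⁻¹ * c) • P₂ with hBdef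
  have hR₂B : R₂ * B = 1 := by
    rw [hR₂, hBdef, aux_expand1 P₂ hP₂P₂]
    have hcoef1 : (γ : ℂ) * (s : ℂ)⁻¹ - (γ : ℂ) * ((s : ℂ)⁻¹ * c) - (s : ℂ) * ((s : ℂ)⁻¹ * c)
        = 0 := by
      rw [hcdef]; field_simp; ring
    have hcoef2 : (s : ℂ) * (s : ℂ)⁻¹ = 1 := mul_inv_cancel₀ hs'
    rw [hcoef1, hcoef2, zero_smul, one_smul, zero_add]
  have hdet : IsUnit R₂.det := Matrix.isUnit_det_of_right_inverse hR₂B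
  refine ⟨hdet, ?_⟩
  have hR₂inv : R₂⁻¹ = B := Matrix.inv_eq_right_inv hR₂B
  set a : ℂ := (γ : ℂ) / s with hadef
  have hA : R₂⁻¹ * R₁ = 1 + a • P₁ - c • P₂ := by
    rw [hR₂inv, hBdef, hR₁, aux_expand2 P₂ P₁ hP₂P₁]
    have h1 : (s : ℂ)⁻¹ * γ = a := by rw [hadef]; field_simp
    have h2 : (s : ℂ)⁻¹ * s = 1 := inv_mul_cancel₀ hs'
    have h3 : (s : ℂ)⁻¹ * c * s = c := by field_simp
    rw [h1, h2, h3, one_smul]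
    abel
  set l₁ : ℂ := ((((γ + s) / s : ℝ)) : ℂ) with hl₁def
  set l₂ : ℂ := (((s / (γ + s) : ℝ)) : ℂ) with hl₂def
  have h01 : (0 : Fin M) ≠ 1 := by
    intro h
    have := congrArg Fin.val h
    simp [Fin.val_one', Nat.mod_eq_of_lt (by omega : 1 < M)] at this
  set v : Fin M → EuclideanSpace ℂ (Fin M) := fun i => if i = 0 then WithLp.toLp 2 u₁ else WithLp.toLp 2 u₂ with hvdef
  have hvo : Orthonormal ℂ (Set.restrict ({0, 1} : Set (Fin M)) v) := by
    rw [orthonormal_iff_ite]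
    rintro ⟨i, hi⟩ ⟨j, hj⟩
    have hv0 : v 0 = WithLp.toLp 2 u₁ := by rw [hvdef]; simp
    have hv1 : v 1 = WithLp.toLp 2 u₂ := by rw [hvdef]; simp [h01.symm]
    rcases hi with hi | hi <;> rcases hj with hj | hj <;> subst hi <;> subst hj
    · rw [if_pos rfl]
      show (inner ℂ (v 0) (v 0) : ℂ) = 1
      rw [hv0]
      rw [PiLp.inner_apply]; simp only [RCLike.inner_apply, PiLp.toLp_apply]
      simpa [dotProduct, mul_comm] using hu₁
    · rw [if_neg (by simp [Subtype.ext_iff, h01])]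
      show (inner ℂ (v 0) (v 1) : ℂ) = 0
      rw [hv0, hv1]
      simpa [PiLp.inner_apply, RCLike.inner_apply, dotProduct, mul_comm] using horth
    · rw [if_neg (by simp [Subtype.ext_iff, h01.symm])]
      show (inner ℂ (v 1) (v 0) : ℂ) = 0
      rw [hv0, hv1]
      simpa [PiLp.inner_apply, RCLike.inner_apply, dotProduct, mul_comm] using horth'
    · rw [if_pos rfl]
      show (inner ℂ (v 1) (v 1) : ℂ) = 1
      rw [hv1]
      rw [PiLp.inner_apply]; simp only [RCLike.inner_apply, PiLp.toLp_apply]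
      simpa [dotProduct, mul_comm] using hu₂
  obtain ⟨b, hb⟩ := hvo.exists_orthonormalBasis_extension_of_card_eq
    (by simp [finrank_euclideanSpace])
  set w : Fin M → (Fin M → ℂ) := fun i j => b i j with hwdef
  have hw0 : w 0 = u₁ := by
    funext j
    have h := hb 0 (by simp)
    rw [hwdef]
    simp only [h, hvdef, if_pos rfl, WithLp.ofLp_toLp]
  have hw1 : w 1 = u₂ := by
    funext j
    have h := hb 1 (by simp)
    rw [hwdef]
    simp only [h, hvdef, if_neg h01.symm, WithLp.ofLp_toLp]
  have hinner : ∀ i k : Fin M, dotProduct (star (w i)) (w k) = if i = k then 1 else 0 := by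
    intro i k
    have h := (orthonormal_iff_ite (𝕜 := ℂ)).mp b.orthonormal i k
    rw [← h]
    simp [PiLp.inner_apply, RCLike.inner_apply, dotProduct, hwdef, mul_comm]
  set d : Fin M → ℂ := fun i => if i = 0 then l₁ else if i = 1 then l₂ else 1 with hddef
  set U := (Matrix.of (fun j i => w i j) : Matrix (Fin M) (Fin M) ℂ) with hUdef
  have hUHU : Uᴴ * U = 1 := by
    ext i k
    rw [Matrix.mul_apply, Matrix.one_apply]
    have h := hinner i k
    simp only [Matrix.conjTranspose_apply, hUdef, Matrix.of_apply, dotProduct,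
      Pi.star_apply, RCLike.star_def] at h ⊢
    exact h.trans (by split <;> simp)
  have hUUH : U * Uᴴ = 1 := mul_eq_one_comm.mp hUHU
  have hd0 : d 0 = l₁ := by rw [hddef]; simp
  have hd1 : d 1 = l₂ := by rw [hddef]; simp [h01.symm]
  have hd2 : ∀ i : Fin M, i ≠ 0 → i ≠ 1 → d i = 1 := by
    intro i hi0 hi1; rw [hddef]; simp [hi0, hi1]
  have hcol : ∀ i : Fin M, (R₂⁻¹ * R₁) *ᵥ (w i) = d i • (w i) := by
    intro i
    rw [hA, Matrix.sub_mulVec, Matrix.add_mulVec, Matrix.one_mulVec, Matrix.smul_mulVec,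
      Matrix.smul_mulVec, hP₁def, hP₂def, aux_vecMulVec_mulVec, aux_vecMulVec_mulVec]
    have e1 : dotProduct (star u₁) (w i) = if i = 0 then 1 else 0 := by
      rw [← hw0, hinner 0 i]
      simp [eq_comm]
    have e2 : dotProduct (star u₂) (w i) = if i = 1 then 1 else 0 := by
      rw [← hw1, hinner 1 i]
      simp [eq_comm]
    rw [e1, e2]
    by_cases h0 : i = 0
    · subst h0
      rw [if_pos rfl, if_neg h01, one_smul, zero_smul, smul_zero, sub_zero, hw0, hd0]
      have he : (1 : ℂ) + a = l₁ := by
        rw [hadef, hl₁def]; push_cast; field_simp; ring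
      rw [← he, add_smul, one_smul]
    · by_cases h1 : i = 1
      · subst h1
        rw [if_neg h0, if_pos rfl, zero_smul, smul_zero, add_zero, one_smul, hw1, hd1]
        have he : (1 : ℂ) - c = l₂ := by
          rw [hcdef, hl₂def]; push_cast; field_simp; ring
        rw [← he, sub_smul, one_smul]
      · rw [if_neg h0, if_neg h1, zero_smul, zero_smul, smul_zero, smul_zero, add_zero, sub_zero,
          hd2 i h0 h1, one_smul]
  have hcomm : (R₂⁻¹ * R₁) * U = U * Matrix.diagonal d := by
    ext j i
    rw [Matrix.mul_diagonal, Matrix.mul_apply]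
    have h := congrFun (hcol i) j
    simp only [Matrix.mulVec, dotProduct, Pi.smul_apply, smul_eq_mul] at h
    simp only [hUdef, Matrix.of_apply]
    rw [h, mul_comm]
  have hAeq : R₂⁻¹ * R₁ = U * Matrix.diagonal d * Uᴴ := by
    calc R₂⁻¹ * R₁ = (R₂⁻¹ * R₁) * (U * Uᴴ) := by rw [hUUH, mul_one]
      _ = ((R₂⁻¹ * R₁) * U) * Uᴴ := (mul_assoc _ _ _).symm
      _ = U * Matrix.diagonal d * Uᴴ := by rw [hcomm]
  rw [hAeq, aux_charpoly_conj U Uᴴ _ hUUH, aux_charpoly_diagonal]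
  have h0mem : (0 : Fin M) ∈ Finset.univ := Finset.mem_univ _
  rw [Finset.prod_eq_mul_prod_sdiff_singleton_of_mem h0mem (fun i => X - C (d i))]
  have h1mem : (1 : Fin M) ∈ Finset.univ \ {0} := by
    simp [h01.symm]
  rw [Finset.prod_eq_mul_prod_sdiff_singleton_of_mem h1mem (fun i => X - C (d i))]
  have hrest : ∀ i ∈ (Finset.univ \ {0} : Finset (Fin M)) \ {1},
      X - C (d i) = X - 1 := by
    intro i hi
    simp only [Finset.mem_sdiff, Finset.mem_singleton, Finset.mem_univ, true_and] at hi
    rw [hd2 i hi.1 hi.2]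
    simp
  rw [Finset.prod_congr rfl hrest, Finset.prod_const]
  have hcard : ((Finset.univ \ {0} : Finset (Fin M)) \ {1}).card = M - 2 := by
    rw [Finset.sdiff_singleton_eq_erase, Finset.sdiff_singleton_eq_erase,
      Finset.card_erase_of_mem (by simpa using h1mem), Finset.card_erase_of_mem h0mem]
    simp
    omega
  rw [hcard, hd0, hd1, ← mul_assoc]
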